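/- The direct product W(A₄) × W(I₂(3)) (isomorphic to Sym(5) × Sym(3)) is a strongly real Beauville group. -/

import Mathlib

/-- `beauvilleSigma g h` is the set `Σ(g,h)`: the union over all integers `i` and all
`k` in the group of the conjugates `k⁻¹ gⁱ k`, `k⁻¹ hⁱ k` and `k⁻¹ (gh)ⁱ k`. -/
def beauvilleSigma {G : Type*} [Group G] (g h : G) : Set G :=
  {w | ∃ (i : ℤ) (k : G),
    w = k⁻¹ * g ^ i * k ∨ w = k⁻¹ * h ^ i * k ∨ w = k⁻¹ * (g * h) ^ i * k}

/-- `{x₁,y₁}, {x₂,y₂}` is an (unmixed) Beauville structure on `G`: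
both pairs generate `G` and `Σ(x₁,y₁) ∩ Σ(x₂,y₂) = {1}`. -/
def IsBeauvilleStructure {G : Type*} [Group G] (x₁ y₁ x₂ y₂ : G) : Prop :=
  Subgroup.closure {x₁, y₁} = ⊤ ∧ Subgroup.closure {x₂, y₂} = ⊤ ∧
    beauvilleSigma x₁ y₁ ∩ beauvilleSigma x₂ y₂ = {1}

/-- A group is a Beauville group if it admits a Beauville structure. -/
def IsBeauvilleGroup (G : Type*) [Group G] : Prop :=
  ∃ x₁ y₁ x₂ y₂ : G, IsBeauvilleStructure x₁ y₁ x₂ y₂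

/-- A group is a strongly real Beauville group if it admits a Beauville structure
`{x₁,y₁}, {x₂,y₂}` together with an automorphism `φ` and elements `g₁, g₂` such that
`gᵢ φ(xᵢ) gᵢ⁻¹ = xᵢ⁻¹` and `gᵢ φ(yᵢ) gᵢ⁻¹ = yᵢ⁻¹` for `i = 1, 2`. -/
def IsStronglyRealBeauvilleGroup (G : Type*) [Group G] : Prop :=
  ∃ x₁ y₁ x₂ y₂ : G, IsBeauvilleStructure x₁ y₁ x₂ y₂ ∧
    ∃ (φ : G ≃* G) (g₁ g₂ : G),
      g₁ * φ x₁ * g₁⁻¹ = x₁⁻¹ ∧ g₁ * φ y₁ * g₁⁻¹ = y₁⁻¹ ∧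
      g₂ * φ x₂ * g₂⁻¹ = x₂⁻¹ ∧ g₂ * φ y₂ * g₂⁻¹ = y₂⁻¹

set_option maxRecDepth 100000
set_option maxHeartbeats 1000000

namespace Stmt16C
open CoxeterMatrix Equiv

/- ================= generic covering lemmas ================= -/

private lemma cover_of_closed {G : Type*} [Group G] {S : Set G}
    (hS : Subgroup.closure S = ⊤) (hinv : ∀ s ∈ S, s⁻¹ ∈ S)
    {U : Set G} (h1 : (1:G) ∈ U) (hstep : ∀ u ∈ U, ∀ s ∈ S, u * s ∈ U)
    (g : G) : g ∈ U := by
  have hsub : S ∪ S⁻¹ ⊆ S := by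
    rintro s (hs | hs)
    · exact hs
    · have : s⁻¹ ∈ S := hs
      simpa using hinv _ this
  have hg : g ∈ Submonoid.closure (S ∪ S⁻¹) := by
    rw [← Subgroup.closure_toSubmonoid, hS]
    exact Subgroup.mem_top g
  have key : ∀ u ∈ U, u * g ∈ U := by
    induction hg using Submonoid.closure_induction with
    | mem x hx => exact fun u hu => hstep u hu x (hsub hx)
    | one => intro u hu; simpa using hu
    | mul x y hx hy ihx ihy =>
      intro u hu
      rw [← mul_assoc]
      exact ihy _ (ihx u hu)
  simpa using key 1 h1

private lemma step_cover {G H : Type*} [Group G] [Group H] (f : H →* G)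
    {S : Set G} (hS : Subgroup.closure S = ⊤) (hinv : ∀ s ∈ S, s⁻¹ ∈ S)
    (C : List G) (h1 : (1:G) ∈ C)
    (hstep : ∀ c ∈ C, ∀ s ∈ S, ∃ h : H, ∃ c' ∈ C, c * s = f h * c') :
    ∀ g : G, ∃ h : H, ∃ c ∈ C, g = f h * c := by
  intro g
  refine cover_of_closed (U := {g : G | ∃ h : H, ∃ c ∈ C, g = f h * c}) hS hinv
    ⟨1, 1, h1, by simp⟩ ?_ g
  rintro u ⟨h, c, hc, rfl⟩ s hs
  obtain ⟨h', c', hc', he⟩ := hstep c hc s hs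
  exact ⟨h * h', c', hc', by rw [map_mul, mul_assoc, he, ← mul_assoc]⟩

private lemma finite_and_card_le {G H : Type*} [Group G] [Group H] [Finite H] (f : H →* G)
    {S : Set G} (hS : Subgroup.closure S = ⊤) (hinv : ∀ s ∈ S, s⁻¹ ∈ S)
    (C : List G) (h1 : (1:G) ∈ C)
    (hstep : ∀ c ∈ C, ∀ s ∈ S, ∃ h : H, ∃ c' ∈ C, c * s = f h * c') :
    Finite G ∧ Nat.card G ≤ Nat.card H * C.length := by
  have cov := step_cover f hS hinv C h1 hstep
  let φ : H × Fin C.length → G := fun p => f p.1 * C.get p.2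
  have hφ : Function.Surjective φ := by
    intro g
    obtain ⟨h, c, hc, rfl⟩ := cov g
    obtain ⟨j, hj⟩ := List.mem_iff_get.mp hc
    exact ⟨(h, j), by simp only [φ]; rw [show C.get j = c from hj]⟩
  have hfin : Finite G := Finite.of_surjective φ hφ
  refine ⟨hfin, ?_⟩
  calc Nat.card G ≤ Nat.card (H × Fin C.length) := Nat.card_le_card_of_surjective φ hφ
    _ = Nat.card H * C.length := by simp [Nat.card_prod]

private lemma finite_and_card_le_two {G : Type*} [Group G] {s : G}
    (hS : Subgroup.closure ({s} : Set G) = ⊤) (hs : s * s = 1) :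
    Finite G ∧ Nat.card G ≤ 2 := by
  have hsi : s⁻¹ = s := by rw [inv_eq_iff_mul_eq_one, hs]
  have cov : ∀ g : G, g ∈ ({1, s} : Set G) := by
    refine cover_of_closed hS ?_ (by simp) ?_
    · intro t ht
      rcases ht with rfl
      simp [hsi]
    · rintro u (rfl | rfl) t rfl
      · simp
      · simp [hs]
  have hφ : Function.Surjective (fun b : Bool => if b then s else 1) := by
    intro g
    rcases cov g with rfl | rfl
    exacts [⟨false, rfl⟩, ⟨true, rfl⟩]
  have hfin : Finite G := Finite.of_surjective _ hφ
  refine ⟨hfin, ?_⟩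
  calc Nat.card G ≤ Nat.card Bool := Nat.card_le_card_of_surjective _ hφ
    _ = 2 := by simp

private lemma coxeter_cover {B : Type*} (M : CoxeterMatrix B) {H : Type*} [Group H] [Finite H]
    (f : H →* M.Group) (C : List M.Group) (h1 : (1 : M.Group) ∈ C)
    (hstep : ∀ c ∈ C, ∀ i : B, ∃ h : H, ∃ c' ∈ C, c * M.toCoxeterSystem.simple i = f h * c') :
    Finite M.Group ∧ Nat.card M.Group ≤ Nat.card H * C.length := by
  refine finite_and_card_le f M.toCoxeterSystem.subgroup_closure_range_simple ?_ C h1 ?_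
  · rintro s ⟨i, rfl⟩
    exact ⟨i, (M.toCoxeterSystem.inv_simple i).symm⟩
  · rintro c hc s ⟨i, rfl⟩
    exact hstep c hc i

/- ================= relation helpers ================= -/

private lemma comm_tail {G : Type*} [Group G] {a b : G} (h : a * b = b * a) (w : G) :
    a * (b * w) = b * (a * w) := by rw [← mul_assoc, h, mul_assoc]

private lemma braid_tail {G : Type*} [Group G] {a b : G} (h : a * (b * a) = b * (a * b)) (w : G) :
    a * (b * (a * w)) = b * (a * (b * w)) := by
  have h' : a * b * a = b * a * b := by simpa [mul_assoc] using h
  rw [← mul_assoc, ← mul_assoc, h', mul_assoc, mul_assoc]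

private lemma comm_of_rel {G : Type*} [Group G] {a b : G} (ha : a * a = 1) (hb : b * b = 1)
    (h : (a * b) ^ 2 = 1) : a * b = b * a := by
  have hai : a⁻¹ = a := by rw [inv_eq_iff_mul_eq_one, ha]
  have hbi : b⁻¹ = b := by rw [inv_eq_iff_mul_eq_one, hb]
  have h2 : (a * b) * (a * b) = 1 := by rw [← pow_two]; exact h
  rw [mul_eq_one_iff_eq_inv.mp h2, mul_inv_rev, hai, hbi]

private lemma braid_of_rel {G : Type*} [Group G] {a b : G} (ha : a * a = 1) (hb : b * b = 1)
    (h : (a * b) ^ 3 = 1) : a * (b * a) = b * (a * b) := by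
  have hai : a⁻¹ = a := by rw [inv_eq_iff_mul_eq_one, ha]
  have hbi : b⁻¹ = b := by rw [inv_eq_iff_mul_eq_one, hb]
  have h2 : (a * b * a) * (b * a * b) = 1 := by
    have h3 : a * (b * (a * (b * (a * b)))) = 1 := by
      simpa [pow_succ, mul_assoc] using h
    simpa [mul_assoc] using h3
  have h4 := mul_eq_one_iff_eq_inv.mp h2
  rw [← mul_assoc, ← mul_assoc, h4, mul_inv_rev, mul_inv_rev, hai, hbi, mul_assoc]

private lemma fin_mk2_3 (h : 2 < 3) : (⟨2, h⟩ : Fin 3) = 2 := rfl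
private lemma fin_mk2_4 (h : 2 < 4) : (⟨2, h⟩ : Fin 4) = 2 := rfl
private lemma fin_mk3_4 (h : 3 < 4) : (⟨3, h⟩ : Fin 4) = 3 := rfl

/- ================= level 1 ================= -/

private noncomputable def t1 (i : Fin 1) : (Aₙ 1).Group := (Aₙ 1).toCoxeterSystem.simple i

private lemma finW1 : Finite (Aₙ 1).Group ∧ Nat.card (Aₙ 1).Group ≤ 2 := by
  refine finite_and_card_le_two (s := t1 0) ?_ ((Aₙ 1).toCoxeterSystem.simple_mul_simple_self 0)
  have h := (Aₙ 1).toCoxeterSystem.subgroup_closure_range_simple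
  rw [← h]
  congr 1
  ext x
  simp only [Set.mem_singleton_iff, Set.mem_range]
  constructor
  · rintro rfl; exact ⟨0, rfl⟩
  · rintro ⟨i, rfl⟩
    exact congrArg _ (Subsingleton.elim i 0)

/- ================= inclusions ================= -/

private noncomputable def iota (k : ℕ)
    (hM : ∀ i i' : Fin k, (Aₙ k) i i' = (Aₙ (k+1)) i.castSucc i'.castSucc) :
    (Aₙ k).Group →* (Aₙ (k+1)).Group :=
  (Aₙ k).toCoxeterSystem.lift
    ⟨fun i => (Aₙ (k+1)).toCoxeterSystem.simple i.castSucc,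
     fun i i' => by
      rw [hM i i']
      exact (Aₙ (k+1)).toCoxeterSystem.simple_mul_simple_pow _ _⟩

private lemma iota_simple (k : ℕ)
    (hM : ∀ i i' : Fin k, (Aₙ k) i i' = (Aₙ (k+1)) i.castSucc i'.castSucc) (i : Fin k) :
    iota k hM ((Aₙ k).toCoxeterSystem.simple i) = (Aₙ (k+1)).toCoxeterSystem.simple i.castSucc :=
  (Aₙ k).toCoxeterSystem.lift_apply_simple _ i

private lemma hM1 : ∀ i i' : Fin 1, (Aₙ 1) i i' = (Aₙ 2) i.castSucc i'.castSucc := by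
  intro i i'; fin_cases i <;> fin_cases i' <;> rfl
private lemma hM2 : ∀ i i' : Fin 2, (Aₙ 2) i i' = (Aₙ 3) i.castSucc i'.castSucc := by
  intro i i'; fin_cases i <;> fin_cases i' <;> rfl
private lemma hM3 : ∀ i i' : Fin 3, (Aₙ 3) i i' = (Aₙ 4) i.castSucc i'.castSucc := by
  intro i i'; fin_cases i <;> fin_cases i' <;> rfl

private noncomputable def t2 (i : Fin 2) : (Aₙ 2).Group := (Aₙ 2).toCoxeterSystem.simple i
private lemma t2_def (i : Fin 2) : (Aₙ 2).toCoxeterSystem.simple i = t2 i := rfl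
private lemma sqt2 (i : Fin 2) : t2 i * t2 i = 1 := (Aₙ 2).toCoxeterSystem.simple_mul_simple_self i
private lemma cant2 (i : Fin 2) (w : (Aₙ 2).Group) : t2 i * (t2 i * w) = w := by rw [← mul_assoc, sqt2, one_mul]
private lemma B01t2 : t2 1 * (t2 0 * t2 1) = t2 0 * (t2 1 * t2 0) :=
  braid_of_rel (sqt2 1) (sqt2 0) (by have := (Aₙ 2).toCoxeterSystem.simple_mul_simple_pow 1 0; rwa [show ((Aₙ 2) 1 0 : ℕ) = 3 from by decide] at this)
private lemma hf2_0 : iota 1 hM1 (t1 0) = t2 0 := by rw [t1, iota_simple]; rfl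
private lemma finW2 : Finite (Aₙ 2).Group ∧ Nat.card (Aₙ 2).Group ≤ 6 := by
  haveI : Finite (Aₙ 1).Group := finW1.1
  have h := coxeter_cover (Aₙ 2) (iota 1 hM1) ([1, t2 1, t2 1 * t2 0] : List (Aₙ 2).Group) (by simp) ?_
  · refine ⟨h.1, le_trans h.2 ?_⟩
    have := finW1.2
    simpa using Nat.mul_le_mul_right 3 this
  · intro c hc i
    fin_cases hc <;> fin_cases i
    · exact ⟨t1 0, 1, by simp, by simp only [Fin.mk_zero, Fin.mk_one, fin_mk2_3, fin_mk2_4, fin_mk3_4, map_one, one_mul, mul_one, mul_assoc, t2_def, sqt2, cant2, B01t2, braid_tail B01t2, hf2_0]⟩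
    · exact ⟨1, t2 1, by simp, by simp only [Fin.mk_zero, Fin.mk_one, fin_mk2_3, fin_mk2_4, fin_mk3_4, map_one, one_mul, mul_one, mul_assoc, t2_def, sqt2, cant2, B01t2, braid_tail B01t2, hf2_0]⟩
    · exact ⟨1, t2 1 * t2 0, by simp, by simp only [Fin.mk_zero, Fin.mk_one, fin_mk2_3, fin_mk2_4, fin_mk3_4, map_one, one_mul, mul_one, mul_assoc, t2_def, sqt2, cant2, B01t2, braid_tail B01t2, hf2_0]⟩
    · exact ⟨1, 1, by simp, by simp only [Fin.mk_zero, Fin.mk_one, fin_mk2_3, fin_mk2_4, fin_mk3_4, map_one, one_mul, mul_one, mul_assoc, t2_def, sqt2, cant2, B01t2, braid_tail B01t2, hf2_0]⟩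
    · exact ⟨1, t2 1, by simp, by simp only [Fin.mk_zero, Fin.mk_one, fin_mk2_3, fin_mk2_4, fin_mk3_4, map_one, one_mul, mul_one, mul_assoc, t2_def, sqt2, cant2, B01t2, braid_tail B01t2, hf2_0]⟩
    · exact ⟨t1 0, t2 1 * t2 0, by simp, by simp only [Fin.mk_zero, Fin.mk_one, fin_mk2_3, fin_mk2_4, fin_mk3_4, map_one, one_mul, mul_one, mul_assoc, t2_def, sqt2, cant2, B01t2, braid_tail B01t2, hf2_0]⟩

private noncomputable def t3 (i : Fin 3) : (Aₙ 3).Group := (Aₙ 3).toCoxeterSystem.simple i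
private lemma t3_def (i : Fin 3) : (Aₙ 3).toCoxeterSystem.simple i = t3 i := rfl
private lemma sqt3 (i : Fin 3) : t3 i * t3 i = 1 := (Aₙ 3).toCoxeterSystem.simple_mul_simple_self i
private lemma cant3 (i : Fin 3) (w : (Aₙ 3).Group) : t3 i * (t3 i * w) = w := by rw [← mul_assoc, sqt3, one_mul]
private lemma C02t3 : t3 0 * t3 2 = t3 2 * t3 0 :=
  comm_of_rel (sqt3 0) (sqt3 2) (by have := (Aₙ 3).toCoxeterSystem.simple_mul_simple_pow 0 2; rwa [show ((Aₙ 3) 0 2 : ℕ) = 2 from by decide] at this)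
private lemma B01t3 : t3 1 * (t3 0 * t3 1) = t3 0 * (t3 1 * t3 0) :=
  braid_of_rel (sqt3 1) (sqt3 0) (by have := (Aₙ 3).toCoxeterSystem.simple_mul_simple_pow 1 0; rwa [show ((Aₙ 3) 1 0 : ℕ) = 3 from by decide] at this)
private lemma B12t3 : t3 2 * (t3 1 * t3 2) = t3 1 * (t3 2 * t3 1) :=
  braid_of_rel (sqt3 2) (sqt3 1) (by have := (Aₙ 3).toCoxeterSystem.simple_mul_simple_pow 2 1; rwa [show ((Aₙ 3) 2 1 : ℕ) = 3 from by decide] at this)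
private lemma hf3_0 : iota 2 hM2 (t2 0) = t3 0 := by rw [t2, iota_simple]; rfl
private lemma hf3_1 : iota 2 hM2 (t2 1) = t3 1 := by rw [t2, iota_simple]; rfl
private lemma finW3 : Finite (Aₙ 3).Group ∧ Nat.card (Aₙ 3).Group ≤ 24 := by
  haveI : Finite (Aₙ 2).Group := finW2.1
  have h := coxeter_cover (Aₙ 3) (iota 2 hM2) ([1, t3 2, t3 2 * t3 1, t3 2 * t3 1 * t3 0] : List (Aₙ 3).Group) (by simp) ?_
  · refine ⟨h.1, le_trans h.2 ?_⟩
    have := finW2.2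
    simpa using Nat.mul_le_mul_right 4 this
  · intro c hc i
    fin_cases hc <;> fin_cases i
    · exact ⟨t2 0, 1, by simp, by simp only [Fin.mk_zero, Fin.mk_one, fin_mk2_3, fin_mk2_4, fin_mk3_4, map_one, one_mul, mul_one, mul_assoc, t3_def, sqt3, cant3, C02t3, comm_tail C02t3, B01t3, braid_tail B01t3, B12t3, braid_tail B12t3, hf3_0, hf3_1]⟩
    · exact ⟨t2 1, 1, by simp, by simp only [Fin.mk_zero, Fin.mk_one, fin_mk2_3, fin_mk2_4, fin_mk3_4, map_one, one_mul, mul_one, mul_assoc, t3_def, sqt3, cant3, C02t3, comm_tail C02t3, B01t3, braid_tail B01t3, B12t3, braid_tail B12t3, hf3_0, hf3_1]⟩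
    · exact ⟨1, t3 2, by simp, by simp only [Fin.mk_zero, Fin.mk_one, fin_mk2_3, fin_mk2_4, fin_mk3_4, map_one, one_mul, mul_one, mul_assoc, t3_def, sqt3, cant3, C02t3, comm_tail C02t3, B01t3, braid_tail B01t3, B12t3, braid_tail B12t3, hf3_0, hf3_1]⟩
    · exact ⟨t2 0, t3 2, by simp, by simp only [Fin.mk_zero, Fin.mk_one, fin_mk2_3, fin_mk2_4, fin_mk3_4, map_one, one_mul, mul_one, mul_assoc, t3_def, sqt3, cant3, C02t3, comm_tail C02t3, B01t3, braid_tail B01t3, B12t3, braid_tail B12t3, hf3_0, hf3_1]⟩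
    · exact ⟨1, t3 2 * t3 1, by simp, by simp only [Fin.mk_zero, Fin.mk_one, fin_mk2_3, fin_mk2_4, fin_mk3_4, map_one, one_mul, mul_one, mul_assoc, t3_def, sqt3, cant3, C02t3, comm_tail C02t3, B01t3, braid_tail B01t3, B12t3, braid_tail B12t3, hf3_0, hf3_1]⟩
    · exact ⟨1, 1, by simp, by simp only [Fin.mk_zero, Fin.mk_one, fin_mk2_3, fin_mk2_4, fin_mk3_4, map_one, one_mul, mul_one, mul_assoc, t3_def, sqt3, cant3, C02t3, comm_tail C02t3, B01t3, braid_tail B01t3, B12t3, braid_tail B12t3, hf3_0, hf3_1]⟩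
    · exact ⟨1, t3 2 * t3 1 * t3 0, by simp, by simp only [Fin.mk_zero, Fin.mk_one, fin_mk2_3, fin_mk2_4, fin_mk3_4, map_one, one_mul, mul_one, mul_assoc, t3_def, sqt3, cant3, C02t3, comm_tail C02t3, B01t3, braid_tail B01t3, B12t3, braid_tail B12t3, hf3_0, hf3_1]⟩
    · exact ⟨1, t3 2, by simp, by simp only [Fin.mk_zero, Fin.mk_one, fin_mk2_3, fin_mk2_4, fin_mk3_4, map_one, one_mul, mul_one, mul_assoc, t3_def, sqt3, cant3, C02t3, comm_tail C02t3, B01t3, braid_tail B01t3, B12t3, braid_tail B12t3, hf3_0, hf3_1]⟩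
    · exact ⟨t2 1, t3 2 * t3 1, by simp, by simp only [Fin.mk_zero, Fin.mk_one, fin_mk2_3, fin_mk2_4, fin_mk3_4, map_one, one_mul, mul_one, mul_assoc, t3_def, sqt3, cant3, C02t3, comm_tail C02t3, B01t3, braid_tail B01t3, B12t3, braid_tail B12t3, hf3_0, hf3_1]⟩
    · exact ⟨1, t3 2 * t3 1, by simp, by simp only [Fin.mk_zero, Fin.mk_one, fin_mk2_3, fin_mk2_4, fin_mk3_4, map_one, one_mul, mul_one, mul_assoc, t3_def, sqt3, cant3, C02t3, comm_tail C02t3, B01t3, braid_tail B01t3, B12t3, braid_tail B12t3, hf3_0, hf3_1]⟩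
    · exact ⟨t2 0, t3 2 * t3 1 * t3 0, by simp, by simp only [Fin.mk_zero, Fin.mk_one, fin_mk2_3, fin_mk2_4, fin_mk3_4, map_one, one_mul, mul_one, mul_assoc, t3_def, sqt3, cant3, C02t3, comm_tail C02t3, B01t3, braid_tail B01t3, B12t3, braid_tail B12t3, hf3_0, hf3_1]⟩
    · exact ⟨t2 1, t3 2 * t3 1 * t3 0, by simp, by simp only [Fin.mk_zero, Fin.mk_one, fin_mk2_3, fin_mk2_4, fin_mk3_4, map_one, one_mul, mul_one, mul_assoc, t3_def, sqt3, cant3, C02t3, comm_tail C02t3, B01t3, braid_tail B01t3, B12t3, braid_tail B12t3, hf3_0, hf3_1]⟩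

private noncomputable def t4 (i : Fin 4) : (Aₙ 4).Group := (Aₙ 4).toCoxeterSystem.simple i
private lemma t4_def (i : Fin 4) : (Aₙ 4).toCoxeterSystem.simple i = t4 i := rfl
private lemma sqt4 (i : Fin 4) : t4 i * t4 i = 1 := (Aₙ 4).toCoxeterSystem.simple_mul_simple_self i
private lemma cant4 (i : Fin 4) (w : (Aₙ 4).Group) : t4 i * (t4 i * w) = w := by rw [← mul_assoc, sqt4, one_mul]
private lemma C02t4 : t4 0 * t4 2 = t4 2 * t4 0 :=
  comm_of_rel (sqt4 0) (sqt4 2) (by have := (Aₙ 4).toCoxeterSystem.simple_mul_simple_pow 0 2; rwa [show ((Aₙ 4) 0 2 : ℕ) = 2 from by decide] at this)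
private lemma C03t4 : t4 0 * t4 3 = t4 3 * t4 0 :=
  comm_of_rel (sqt4 0) (sqt4 3) (by have := (Aₙ 4).toCoxeterSystem.simple_mul_simple_pow 0 3; rwa [show ((Aₙ 4) 0 3 : ℕ) = 2 from by decide] at this)
private lemma C13t4 : t4 1 * t4 3 = t4 3 * t4 1 :=
  comm_of_rel (sqt4 1) (sqt4 3) (by have := (Aₙ 4).toCoxeterSystem.simple_mul_simple_pow 1 3; rwa [show ((Aₙ 4) 1 3 : ℕ) = 2 from by decide] at this)
private lemma B01t4 : t4 1 * (t4 0 * t4 1) = t4 0 * (t4 1 * t4 0) :=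
  braid_of_rel (sqt4 1) (sqt4 0) (by have := (Aₙ 4).toCoxeterSystem.simple_mul_simple_pow 1 0; rwa [show ((Aₙ 4) 1 0 : ℕ) = 3 from by decide] at this)
private lemma B12t4 : t4 2 * (t4 1 * t4 2) = t4 1 * (t4 2 * t4 1) :=
  braid_of_rel (sqt4 2) (sqt4 1) (by have := (Aₙ 4).toCoxeterSystem.simple_mul_simple_pow 2 1; rwa [show ((Aₙ 4) 2 1 : ℕ) = 3 from by decide] at this)
private lemma B23t4 : t4 3 * (t4 2 * t4 3) = t4 2 * (t4 3 * t4 2) :=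
  braid_of_rel (sqt4 3) (sqt4 2) (by have := (Aₙ 4).toCoxeterSystem.simple_mul_simple_pow 3 2; rwa [show ((Aₙ 4) 3 2 : ℕ) = 3 from by decide] at this)
private lemma hf4_0 : iota 3 hM3 (t3 0) = t4 0 := by rw [t3, iota_simple]; rfl
private lemma hf4_1 : iota 3 hM3 (t3 1) = t4 1 := by rw [t3, iota_simple]; rfl
private lemma hf4_2 : iota 3 hM3 (t3 2) = t4 2 := by rw [t3, iota_simple]; rfl
private lemma finW4 : Finite (Aₙ 4).Group ∧ Nat.card (Aₙ 4).Group ≤ 120 := by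
  haveI : Finite (Aₙ 3).Group := finW3.1
  have h := coxeter_cover (Aₙ 4) (iota 3 hM3) ([1, t4 3, t4 3 * t4 2, t4 3 * t4 2 * t4 1, t4 3 * t4 2 * t4 1 * t4 0] : List (Aₙ 4).Group) (by simp) ?_
  · refine ⟨h.1, le_trans h.2 ?_⟩
    have := finW3.2
    simpa using Nat.mul_le_mul_right 5 this
  · intro c hc i
    fin_cases hc <;> fin_cases i
    · exact ⟨t3 0, 1, by simp, by simp only [Fin.mk_zero, Fin.mk_one, fin_mk2_3, fin_mk2_4, fin_mk3_4, map_one, one_mul, mul_one, mul_assoc, t4_def, sqt4, cant4, C02t4, comm_tail C02t4, C03t4, comm_tail C03t4, C13t4, comm_tail C13t4, B01t4, braid_tail B01t4, B12t4, braid_tail B12t4, B23t4, braid_tail B23t4, hf4_0, hf4_1, hf4_2]⟩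
    · exact ⟨t3 1, 1, by simp, by simp only [Fin.mk_zero, Fin.mk_one, fin_mk2_3, fin_mk2_4, fin_mk3_4, map_one, one_mul, mul_one, mul_assoc, t4_def, sqt4, cant4, C02t4, comm_tail C02t4, C03t4, comm_tail C03t4, C13t4, comm_tail C13t4, B01t4, braid_tail B01t4, B12t4, braid_tail B12t4, B23t4, braid_tail B23t4, hf4_0, hf4_1, hf4_2]⟩
    · exact ⟨t3 2, 1, by simp, by simp only [Fin.mk_zero, Fin.mk_one, fin_mk2_3, fin_mk2_4, fin_mk3_4, map_one, one_mul, mul_one, mul_assoc, t4_def, sqt4, cant4, C02t4, comm_tail C02t4, C03t4, comm_tail C03t4, C13t4, comm_tail C13t4, B01t4, braid_tail B01t4, B12t4, braid_tail B12t4, B23t4, braid_tail B23t4, hf4_0, hf4_1, hf4_2]⟩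
    · exact ⟨1, t4 3, by simp, by simp only [Fin.mk_zero, Fin.mk_one, fin_mk2_3, fin_mk2_4, fin_mk3_4, map_one, one_mul, mul_one, mul_assoc, t4_def, sqt4, cant4, C02t4, comm_tail C02t4, C03t4, comm_tail C03t4, C13t4, comm_tail C13t4, B01t4, braid_tail B01t4, B12t4, braid_tail B12t4, B23t4, braid_tail B23t4, hf4_0, hf4_1, hf4_2]⟩
    · exact ⟨t3 0, t4 3, by simp, by simp only [Fin.mk_zero, Fin.mk_one, fin_mk2_3, fin_mk2_4, fin_mk3_4, map_one, one_mul, mul_one, mul_assoc, t4_def, sqt4, cant4, C02t4, comm_tail C02t4, C03t4, comm_tail C03t4, C13t4, comm_tail C13t4, B01t4, braid_tail B01t4, B12t4, braid_tail B12t4, B23t4, braid_tail B23t4, hf4_0, hf4_1, hf4_2]⟩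
    · exact ⟨t3 1, t4 3, by simp, by simp only [Fin.mk_zero, Fin.mk_one, fin_mk2_3, fin_mk2_4, fin_mk3_4, map_one, one_mul, mul_one, mul_assoc, t4_def, sqt4, cant4, C02t4, comm_tail C02t4, C03t4, comm_tail C03t4, C13t4, comm_tail C13t4, B01t4, braid_tail B01t4, B12t4, braid_tail B12t4, B23t4, braid_tail B23t4, hf4_0, hf4_1, hf4_2]⟩
    · exact ⟨1, t4 3 * t4 2, by simp, by simp only [Fin.mk_zero, Fin.mk_one, fin_mk2_3, fin_mk2_4, fin_mk3_4, map_one, one_mul, mul_one, mul_assoc, t4_def, sqt4, cant4, C02t4, comm_tail C02t4, C03t4, comm_tail C03t4, C13t4, comm_tail C13t4, B01t4, braid_tail B01t4, B12t4, braid_tail B12t4, B23t4, braid_tail B23t4, hf4_0, hf4_1, hf4_2]⟩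
    · exact ⟨1, 1, by simp, by simp only [Fin.mk_zero, Fin.mk_one, fin_mk2_3, fin_mk2_4, fin_mk3_4, map_one, one_mul, mul_one, mul_assoc, t4_def, sqt4, cant4, C02t4, comm_tail C02t4, C03t4, comm_tail C03t4, C13t4, comm_tail C13t4, B01t4, braid_tail B01t4, B12t4, braid_tail B12t4, B23t4, braid_tail B23t4, hf4_0, hf4_1, hf4_2]⟩
    · exact ⟨t3 0, t4 3 * t4 2, by simp, by simp only [Fin.mk_zero, Fin.mk_one, fin_mk2_3, fin_mk2_4, fin_mk3_4, map_one, one_mul, mul_one, mul_assoc, t4_def, sqt4, cant4, C02t4, comm_tail C02t4, C03t4, comm_tail C03t4, C13t4, comm_tail C13t4, B01t4, braid_tail B01t4, B12t4, braid_tail B12t4, B23t4, braid_tail B23t4, hf4_0, hf4_1, hf4_2]⟩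
    · exact ⟨1, t4 3 * t4 2 * t4 1, by simp, by simp only [Fin.mk_zero, Fin.mk_one, fin_mk2_3, fin_mk2_4, fin_mk3_4, map_one, one_mul, mul_one, mul_assoc, t4_def, sqt4, cant4, C02t4, comm_tail C02t4, C03t4, comm_tail C03t4, C13t4, comm_tail C13t4, B01t4, braid_tail B01t4, B12t4, braid_tail B12t4, B23t4, braid_tail B23t4, hf4_0, hf4_1, hf4_2]⟩
    · exact ⟨1, t4 3, by simp, by simp only [Fin.mk_zero, Fin.mk_one, fin_mk2_3, fin_mk2_4, fin_mk3_4, map_one, one_mul, mul_one, mul_assoc, t4_def, sqt4, cant4, C02t4, comm_tail C02t4, C03t4, comm_tail C03t4, C13t4, comm_tail C13t4, B01t4, braid_tail B01t4, B12t4, braid_tail B12t4, B23t4, braid_tail B23t4, hf4_0, hf4_1, hf4_2]⟩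
    · exact ⟨t3 2, t4 3 * t4 2, by simp, by simp only [Fin.mk_zero, Fin.mk_one, fin_mk2_3, fin_mk2_4, fin_mk3_4, map_one, one_mul, mul_one, mul_assoc, t4_def, sqt4, cant4, C02t4, comm_tail C02t4, C03t4, comm_tail C03t4, C13t4, comm_tail C13t4, B01t4, braid_tail B01t4, B12t4, braid_tail B12t4, B23t4, braid_tail B23t4, hf4_0, hf4_1, hf4_2]⟩
    · exact ⟨1, t4 3 * t4 2 * t4 1 * t4 0, by simp, by simp only [Fin.mk_zero, Fin.mk_one, fin_mk2_3, fin_mk2_4, fin_mk3_4, map_one, one_mul, mul_one, mul_assoc, t4_def, sqt4, cant4, C02t4, comm_tail C02t4, C03t4, comm_tail C03t4, C13t4, comm_tail C13t4, B01t4, braid_tail B01t4, B12t4, braid_tail B12t4, B23t4, braid_tail B23t4, hf4_0, hf4_1, hf4_2]⟩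
    · exact ⟨1, t4 3 * t4 2, by simp, by simp only [Fin.mk_zero, Fin.mk_one, fin_mk2_3, fin_mk2_4, fin_mk3_4, map_one, one_mul, mul_one, mul_assoc, t4_def, sqt4, cant4, C02t4, comm_tail C02t4, C03t4, comm_tail C03t4, C13t4, comm_tail C13t4, B01t4, braid_tail B01t4, B12t4, braid_tail B12t4, B23t4, braid_tail B23t4, hf4_0, hf4_1, hf4_2]⟩
    · exact ⟨t3 1, t4 3 * t4 2 * t4 1, by simp, by simp only [Fin.mk_zero, Fin.mk_one, fin_mk2_3, fin_mk2_4, fin_mk3_4, map_one, one_mul, mul_one, mul_assoc, t4_def, sqt4, cant4, C02t4, comm_tail C02t4, C03t4, comm_tail C03t4, C13t4, comm_tail C13t4, B01t4, braid_tail B01t4, B12t4, braid_tail B12t4, B23t4, braid_tail B23t4, hf4_0, hf4_1, hf4_2]⟩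
    · exact ⟨t3 2, t4 3 * t4 2 * t4 1, by simp, by simp only [Fin.mk_zero, Fin.mk_one, fin_mk2_3, fin_mk2_4, fin_mk3_4, map_one, one_mul, mul_one, mul_assoc, t4_def, sqt4, cant4, C02t4, comm_tail C02t4, C03t4, comm_tail C03t4, C13t4, comm_tail C13t4, B01t4, braid_tail B01t4, B12t4, braid_tail B12t4, B23t4, braid_tail B23t4, hf4_0, hf4_1, hf4_2]⟩
    · exact ⟨1, t4 3 * t4 2 * t4 1, by simp, by simp only [Fin.mk_zero, Fin.mk_one, fin_mk2_3, fin_mk2_4, fin_mk3_4, map_one, one_mul, mul_one, mul_assoc, t4_def, sqt4, cant4, C02t4, comm_tail C02t4, C03t4, comm_tail C03t4, C13t4, comm_tail C13t4, B01t4, braid_tail B01t4, B12t4, braid_tail B12t4, B23t4, braid_tail B23t4, hf4_0, hf4_1, hf4_2]⟩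
    · exact ⟨t3 0, t4 3 * t4 2 * t4 1 * t4 0, by simp, by simp only [Fin.mk_zero, Fin.mk_one, fin_mk2_3, fin_mk2_4, fin_mk3_4, map_one, one_mul, mul_one, mul_assoc, t4_def, sqt4, cant4, C02t4, comm_tail C02t4, C03t4, comm_tail C03t4, C13t4, comm_tail C13t4, B01t4, braid_tail B01t4, B12t4, braid_tail B12t4, B23t4, braid_tail B23t4, hf4_0, hf4_1, hf4_2]⟩
    · exact ⟨t3 1, t4 3 * t4 2 * t4 1 * t4 0, by simp, by simp only [Fin.mk_zero, Fin.mk_one, fin_mk2_3, fin_mk2_4, fin_mk3_4, map_one, one_mul, mul_one, mul_assoc, t4_def, sqt4, cant4, C02t4, comm_tail C02t4, C03t4, comm_tail C03t4, C13t4, comm_tail C13t4, B01t4, braid_tail B01t4, B12t4, braid_tail B12t4, B23t4, braid_tail B23t4, hf4_0, hf4_1, hf4_2]⟩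
    · exact ⟨t3 2, t4 3 * t4 2 * t4 1 * t4 0, by simp, by simp only [Fin.mk_zero, Fin.mk_one, fin_mk2_3, fin_mk2_4, fin_mk3_4, map_one, one_mul, mul_one, mul_assoc, t4_def, sqt4, cant4, C02t4, comm_tail C02t4, C03t4, comm_tail C03t4, C13t4, comm_tail C13t4, B01t4, braid_tail B01t4, B12t4, braid_tail B12t4, B23t4, braid_tail B23t4, hf4_0, hf4_1, hf4_2]⟩


/- ================= the I₂(3) factor ================= -/

private noncomputable def u2 (i : Fin 2) : (CoxeterMatrix.I 1).Group := (CoxeterMatrix.I 1).toCoxeterSystem.simple i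
private lemma u2_def (i : Fin 2) : (CoxeterMatrix.I 1).toCoxeterSystem.simple i = u2 i := rfl
private lemma squ2 (i : Fin 2) : u2 i * u2 i = 1 := (CoxeterMatrix.I 1).toCoxeterSystem.simple_mul_simple_self i
private lemma canu2 (i : Fin 2) (w : (CoxeterMatrix.I 1).Group) : u2 i * (u2 i * w) = w := by
  rw [← mul_assoc, squ2, one_mul]
private lemma B01u2 : u2 1 * (u2 0 * u2 1) = u2 0 * (u2 1 * u2 0) :=
  braid_of_rel (squ2 1) (squ2 0)
    (by have := (CoxeterMatrix.I 1).toCoxeterSystem.simple_mul_simple_pow 1 0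
        rwa [show ((CoxeterMatrix.I 1) 1 0 : ℕ) = 3 from by decide] at this)

private noncomputable def iotaI : (Aₙ 1).Group →* (CoxeterMatrix.I 1).Group :=
  (Aₙ 1).toCoxeterSystem.lift
    ⟨fun _ => u2 0, fun i i' => by
      have h1 : i = 0 := Subsingleton.elim _ _
      have h2 : i' = 0 := Subsingleton.elim _ _
      subst h1; subst h2
      show (u2 0 * u2 0) ^ ((Aₙ 1) 0 0) = 1
      rw [show ((Aₙ 1) 0 0 : ℕ) = 1 from by decide, pow_one]
      exact squ2 0⟩

private lemma hfI_0 : iotaI (t1 0) = u2 0 := (Aₙ 1).toCoxeterSystem.lift_apply_simple _ 0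

private lemma finWI : Finite (CoxeterMatrix.I 1).Group ∧ Nat.card (CoxeterMatrix.I 1).Group ≤ 6 := by
  haveI : Finite (Aₙ 1).Group := finW1.1
  have h := coxeter_cover (CoxeterMatrix.I 1) iotaI ([1, u2 1, u2 1 * u2 0] : List (CoxeterMatrix.I 1).Group) (by simp) ?_
  · refine ⟨h.1, le_trans h.2 ?_⟩
    have := finW1.2
    simpa using Nat.mul_le_mul_right 3 this
  · intro c hc i
    fin_cases hc <;> fin_cases i
    · exact ⟨t1 0, 1, by simp, by simp only [Fin.mk_zero, Fin.mk_one, map_one, one_mul, mul_one, mul_assoc, u2_def, squ2, canu2, B01u2, braid_tail B01u2, hfI_0]⟩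
    · exact ⟨1, u2 1, by simp, by simp only [Fin.mk_zero, Fin.mk_one, map_one, one_mul, mul_one, mul_assoc, u2_def, squ2, canu2, B01u2, braid_tail B01u2, hfI_0]⟩
    · exact ⟨1, u2 1 * u2 0, by simp, by simp only [Fin.mk_zero, Fin.mk_one, map_one, one_mul, mul_one, mul_assoc, u2_def, squ2, canu2, B01u2, braid_tail B01u2, hfI_0]⟩
    · exact ⟨1, 1, by simp, by simp only [Fin.mk_zero, Fin.mk_one, map_one, one_mul, mul_one, mul_assoc, u2_def, squ2, canu2, B01u2, braid_tail B01u2, hfI_0]⟩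
    · exact ⟨1, u2 1, by simp, by simp only [Fin.mk_zero, Fin.mk_one, map_one, one_mul, mul_one, mul_assoc, u2_def, squ2, canu2, B01u2, braid_tail B01u2, hfI_0]⟩
    · exact ⟨t1 0, u2 1 * u2 0, by simp, by simp only [Fin.mk_zero, Fin.mk_one, map_one, one_mul, mul_one, mul_assoc, u2_def, squ2, canu2, B01u2, braid_tail B01u2, hfI_0]⟩

/- ================= homs onto the symmetric groups ================= -/

open Equiv.Perm in
private noncomputable def pi5 : (Aₙ 4).Group →* Perm (Fin 5) :=
  (Aₙ 4).toCoxeterSystem.lift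
    ⟨fun i => Equiv.swap i.castSucc i.succ, fun i i' => by
      fin_cases i <;> fin_cases i' <;> decide⟩

private lemma pi5_simple (i : Fin 4) :
    pi5 ((Aₙ 4).toCoxeterSystem.simple i) = Equiv.swap i.castSucc i.succ :=
  (Aₙ 4).toCoxeterSystem.lift_apply_simple _ i

open Equiv.Perm in
private lemma pi5_surj : Function.Surjective pi5 := by
  have hr : ∀ i : Fin 4, Equiv.swap i.castSucc i.succ ∈ pi5.range :=
    fun i => ⟨_, pi5_simple i⟩
  have h1 : (finRotate 5 : Perm (Fin 5)) ∈ pi5.range := by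
    have he : (finRotate 5 : Perm (Fin 5)) =
        Equiv.swap (Fin.castSucc 0) (Fin.succ 0) * Equiv.swap (Fin.castSucc 1) (Fin.succ 1) *
        Equiv.swap (Fin.castSucc 2) (Fin.succ 2) * Equiv.swap (Fin.castSucc 3) (Fin.succ 3) := by
      decide
    rw [he]
    exact mul_mem (mul_mem (mul_mem (hr 0) (hr 1)) (hr 2)) (hr 3)
  have h2 : Equiv.swap (0 : Fin 5) (finRotate 5 0) ∈ pi5.range := by
    have he : Equiv.swap (0 : Fin 5) (finRotate 5 0) =
        Equiv.swap (Fin.castSucc 0) (Fin.succ 0) := by decide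
    rw [he]; exact hr 0
  have hcl : Subgroup.closure ({finRotate 5, Equiv.swap 0 (finRotate 5 0)} : Set (Perm (Fin 5))) = ⊤ :=
    closure_cycle_adjacent_swap isCycle_finRotate support_finRotate 0
  rw [← MonoidHom.range_eq_top, eq_top_iff, ← hcl, Subgroup.closure_le]
  intro x hx
  simp only [Set.mem_insert_iff, Set.mem_singleton_iff] at hx
  rcases hx with rfl | rfl
  · exact h1
  · exact h2

private lemma pi5_bij : Function.Bijective pi5 := by
  haveI : Finite (Aₙ 4).Group := finW4.1
  have hcard : Nat.card (Perm (Fin 5)) = 120 := by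
    rw [Nat.card_eq_fintype_card, Fintype.card_perm]
    decide
  rw [Nat.bijective_iff_surjective_and_card]
  refine ⟨pi5_surj, ?_⟩
  rw [hcard]
  have hle := finW4.2
  have hge : (120 : ℕ) ≤ Nat.card (Aₙ 4).Group := by
    rw [← hcard]
    exact Nat.card_le_card_of_surjective pi5 pi5_surj
  omega

open Equiv.Perm in
private noncomputable def pi3 : (CoxeterMatrix.I 1).Group →* Perm (Fin 3) :=
  (CoxeterMatrix.I 1).toCoxeterSystem.lift
    ⟨fun i => Equiv.swap i.castSucc i.succ, fun i i' => by
      fin_cases i <;> fin_cases i' <;> decide⟩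

private lemma pi3_simple (i : Fin 2) :
    pi3 ((CoxeterMatrix.I 1).toCoxeterSystem.simple i) = Equiv.swap i.castSucc i.succ :=
  (CoxeterMatrix.I 1).toCoxeterSystem.lift_apply_simple _ i

open Equiv.Perm in
private lemma pi3_surj : Function.Surjective pi3 := by
  have hr : ∀ i : Fin 2, Equiv.swap i.castSucc i.succ ∈ pi3.range :=
    fun i => ⟨_, pi3_simple i⟩
  have h1 : (finRotate 3 : Perm (Fin 3)) ∈ pi3.range := by
    have he : (finRotate 3 : Perm (Fin 3)) =
        Equiv.swap (Fin.castSucc 0) (Fin.succ 0) * Equiv.swap (Fin.castSucc 1) (Fin.succ 1) := by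
      decide
    rw [he]
    exact mul_mem (hr 0) (hr 1)
  have h2 : Equiv.swap (0 : Fin 3) (finRotate 3 0) ∈ pi3.range := by
    have he : Equiv.swap (0 : Fin 3) (finRotate 3 0) =
        Equiv.swap (Fin.castSucc 0) (Fin.succ 0) := by decide
    rw [he]; exact hr 0
  have hcl : Subgroup.closure ({finRotate 3, Equiv.swap 0 (finRotate 3 0)} : Set (Perm (Fin 3))) = ⊤ :=
    closure_cycle_adjacent_swap isCycle_finRotate support_finRotate 0
  rw [← MonoidHom.range_eq_top, eq_top_iff, ← hcl, Subgroup.closure_le]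
  intro x hx
  simp only [Set.mem_insert_iff, Set.mem_singleton_iff] at hx
  rcases hx with rfl | rfl
  · exact h1
  · exact h2

private lemma pi3_bij : Function.Bijective pi3 := by
  haveI : Finite (CoxeterMatrix.I 1).Group := finWI.1
  have hcard : Nat.card (Perm (Fin 3)) = 6 := by
    rw [Nat.card_eq_fintype_card, Fintype.card_perm]
    decide
  rw [Nat.bijective_iff_surjective_and_card]
  refine ⟨pi3_surj, ?_⟩
  rw [hcard]
  have hle := finWI.2
  have hge : (6 : ℕ) ≤ Nat.card (CoxeterMatrix.I 1).Group := by
    rw [← hcard]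
    exact Nat.card_le_card_of_surjective pi3 pi3_surj
  omega

private noncomputable def e5 : (Aₙ 4).Group ≃* Perm (Fin 5) := MulEquiv.ofBijective pi5 pi5_bij
private noncomputable def e3 : (CoxeterMatrix.I 1).Group ≃* Perm (Fin 3) := MulEquiv.ofBijective pi3 pi3_bij

end Stmt16C

namespace Stmt16P
open Equiv

private abbrev PP := Perm (Fin 5) × Perm (Fin 3)

private def X1 : PP := (swap 0 2 * swap 2 3 * swap 3 4 * swap 4 1, swap 0 2)
private def Y1 : PP := (swap 0 1 * swap 1 2 * swap 2 4, swap 0 1 * swap 1 2)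
private def G1 : PP := (swap 0 1 * swap 2 4, swap 0 2)
private def X2 : PP := (swap 0 3 * swap 1 4, swap 0 1)
private def Y2 : PP := (swap 0 4 * swap 1 3 * swap 3 2, swap 0 2 * swap 2 1)
private def G2 : PP := (swap 0 4 * swap 1 3, swap 0 1)

/- ====== conjugacy invariant ====== -/

private def F5 (g : Perm (Fin 5)) : ℕ × ℕ × ℕ × ℕ :=
  (g.support.card, (g^2).support.card, (g^3).support.card, (g^4).support.card)
private def F3 (g : Perm (Fin 3)) : ℕ × ℕ := (g.support.card, (g^2).support.card)
private def Fp (g : PP) : (ℕ×ℕ×ℕ×ℕ) × (ℕ×ℕ) := (F5 g.1, F3 g.2)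

private lemma card_conj_pow {α : Type*} [Fintype α] [DecidableEq α] (σ τ : Perm α) (m : ℕ) :
    ((σ⁻¹ * τ * σ) ^ m).support.card = (τ ^ m).support.card := by
  have h : σ⁻¹ * τ * σ = σ⁻¹ * τ * σ⁻¹⁻¹ := by rw [inv_inv]
  rw [h, conj_pow, Equiv.Perm.support_conj, Finset.card_map]

private lemma F5_conj (σ τ : Perm (Fin 5)) : F5 (σ⁻¹ * τ * σ) = F5 τ := by
  unfold F5
  rw [card_conj_pow σ τ 2, card_conj_pow σ τ 3, card_conj_pow σ τ 4]
  have h1 : (σ⁻¹ * τ * σ).support.card = τ.support.card := by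
    simpa using card_conj_pow σ τ 1
  rw [h1]

private lemma F3_conj (σ τ : Perm (Fin 3)) : F3 (σ⁻¹ * τ * σ) = F3 τ := by
  unfold F3
  rw [card_conj_pow σ τ 2]
  have h1 : (σ⁻¹ * τ * σ).support.card = τ.support.card := by
    simpa using card_conj_pow σ τ 1
  rw [h1]

private lemma Fp_conj (k g : PP) : Fp (k⁻¹ * g * k) = Fp g := by
  rcases k with ⟨k1, k2⟩
  rcases g with ⟨g1, g2⟩
  simp only [Prod.inv_mk, Prod.mk_mul_mk, Fp, F5_conj, F3_conj]

private lemma pow_reduce {G : Type*} [Group G] {a : G} {n : ℕ} (hn : 0 < n) (h : a ^ n = 1)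
    (i : ℤ) : ∃ r : ℕ, r < n ∧ a ^ i = a ^ r := by
  have h1 : 0 ≤ i % (n:ℤ) := Int.emod_nonneg i (by exact_mod_cast hn.ne')
  have h2 : i % (n:ℤ) < n := Int.emod_lt_of_pos i (by exact_mod_cast hn)
  refine ⟨(i % (n:ℤ)).toNat, by omega, ?_⟩
  have h3 : a ^ i = a ^ (((i % (n:ℤ)).toNat : ℤ)) := by
    rw [Int.toNat_of_nonneg h1, zpow_eq_zpow_emod' i h]
  rw [h3, zpow_natCast]

private lemma key {a b : PP} {na nb : ℕ} (h0a : 0 < na) (h0b : 0 < nb)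
    (hea : a ^ na = 1) (heb : b ^ nb = 1)
    (hcore : ∀ (r : Fin na) (r' : Fin nb), Fp (a^(r:ℕ)) = Fp (b^(r':ℕ)) → a^(r:ℕ) = 1)
    {i j : ℤ} {k l : PP} (heq : k⁻¹ * a ^ i * k = l⁻¹ * b ^ j * l) :
    k⁻¹ * a ^ i * k = 1 := by
  obtain ⟨r, hr, hra⟩ := pow_reduce h0a hea i
  obtain ⟨r', hr', hrb⟩ := pow_reduce h0b heb j
  have hfp : Fp (a^r) = Fp (b^r') := by
    calc Fp (a^r) = Fp (a^i) := by rw [hra]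
    _ = Fp (k⁻¹ * a^i * k) := (Fp_conj k _).symm
    _ = Fp (l⁻¹ * b^j * l) := by rw [heq]
    _ = Fp (b^j) := Fp_conj l _
    _ = Fp (b^r') := by rw [hrb]
  have h1 : a^r = 1 := hcore ⟨r, hr⟩ ⟨r', hr'⟩ hfp
  rw [hra, h1, mul_one, inv_mul_cancel]

private lemma inter12 : beauvilleSigma X1 Y1 ∩ beauvilleSigma X2 Y2 = {1} := by
  apply Set.eq_singleton_iff_unique_mem.mpr
  refine ⟨⟨⟨0, 1, Or.inl (by simp)⟩, ⟨0, 1, Or.inl (by simp)⟩⟩, ?_⟩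
  rintro w ⟨⟨i, k, h1 | h1 | h1⟩, ⟨j, l, h2 | h2 | h2⟩⟩ <;> subst h1
  · exact key (by norm_num) (by norm_num) (by decide : X1 ^ 10 = 1)
      (by decide : X2 ^ 2 = 1) (by decide) h2
  · exact key (by norm_num) (by norm_num) (by decide : X1 ^ 10 = 1)
      (by decide : Y2 ^ 6 = 1) (by decide) h2
  · exact key (by norm_num) (by norm_num) (by decide : X1 ^ 10 = 1)
      (by decide : (X2 * Y2) ^ 6 = 1) (by decide) h2
  · exact key (by norm_num) (by norm_num) (by decide : Y1 ^ 12 = 1)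
      (by decide : X2 ^ 2 = 1) (by decide) h2
  · exact key (by norm_num) (by norm_num) (by decide : Y1 ^ 12 = 1)
      (by decide : Y2 ^ 6 = 1) (by decide) h2
  · exact key (by norm_num) (by norm_num) (by decide : Y1 ^ 12 = 1)
      (by decide : (X2 * Y2) ^ 6 = 1) (by decide) h2
  · exact key (by norm_num) (by norm_num) (by decide : (X1 * Y1) ^ 4 = 1)
      (by decide : X2 ^ 2 = 1) (by decide) h2
  · exact key (by norm_num) (by norm_num) (by decide : (X1 * Y1) ^ 4 = 1)
      (by decide : Y2 ^ 6 = 1) (by decide) h2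
  · exact key (by norm_num) (by norm_num) (by decide : (X1 * Y1) ^ 4 = 1)
      (by decide : (X2 * Y2) ^ 6 = 1) (by decide) h2

/- ====== generation ====== -/

open Equiv.Perm in
private lemma gen_aux (x y : PP)
    (hc5 : (((finRotate 5 : Perm (Fin 5)), (1 : Perm (Fin 3))) : PP) ∈ Subgroup.closure {x, y})
    (ht5 : (((Equiv.swap 0 (finRotate 5 0) : Perm (Fin 5)), (1 : Perm (Fin 3))) : PP) ∈ Subgroup.closure {x, y})
    (hc3 : (((1 : Perm (Fin 5)), (finRotate 3 : Perm (Fin 3))) : PP) ∈ Subgroup.closure {x, y})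
    (ht3 : (((1 : Perm (Fin 5)), (Equiv.swap 0 (finRotate 3 0) : Perm (Fin 3))) : PP) ∈ Subgroup.closure {x, y}) :
    Subgroup.closure ({x, y} : Set PP) = ⊤ := by
  rw [eq_top_iff]
  rintro ⟨p, q⟩ -
  have hp : ((p, 1) : PP) ∈ Subgroup.closure ({x, y} : Set PP) := by
    have hmem : p ∈ Subgroup.closure
        ({finRotate 5, Equiv.swap 0 (finRotate 5 0)} : Set (Perm (Fin 5))) := by
      rw [closure_cycle_adjacent_swap isCycle_finRotate support_finRotate 0]
      trivial
    have himg := Subgroup.mem_map_of_mem (MonoidHom.inl (Perm (Fin 5)) (Perm (Fin 3))) hmem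
    rw [MonoidHom.map_closure] at himg
    have hle : Subgroup.closure ((MonoidHom.inl (Perm (Fin 5)) (Perm (Fin 3))) ''
        ({finRotate 5, Equiv.swap 0 (finRotate 5 0)} : Set (Perm (Fin 5)))) ≤
        Subgroup.closure ({x, y} : Set PP) := by
      rw [Subgroup.closure_le]
      rintro z ⟨z', hz', rfl⟩
      simp only [Set.mem_insert_iff, Set.mem_singleton_iff] at hz'
      rcases hz' with rfl | rfl
      · exact hc5
      · exact ht5
    exact hle himg
  have hq : ((1, q) : PP) ∈ Subgroup.closure ({x, y} : Set PP) := by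
    have hmem : q ∈ Subgroup.closure
        ({finRotate 3, Equiv.swap 0 (finRotate 3 0)} : Set (Perm (Fin 3))) := by
      rw [closure_cycle_adjacent_swap isCycle_finRotate support_finRotate 0]
      trivial
    have himg := Subgroup.mem_map_of_mem (MonoidHom.inr (Perm (Fin 5)) (Perm (Fin 3))) hmem
    rw [MonoidHom.map_closure] at himg
    have hle : Subgroup.closure ((MonoidHom.inr (Perm (Fin 5)) (Perm (Fin 3))) ''
        ({finRotate 3, Equiv.swap 0 (finRotate 3 0)} : Set (Perm (Fin 3)))) ≤
        Subgroup.closure ({x, y} : Set PP) := by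
      rw [Subgroup.closure_le]
      rintro z ⟨z', hz', rfl⟩
      simp only [Set.mem_insert_iff, Set.mem_singleton_iff] at hz'
      rcases hz' with rfl | rfl
      · exact hc3
      · exact ht3
    exact hle himg
  have hpq : ((p, q) : PP) = (p, 1) * (1, q) := by
    rw [Prod.mk_mul_mk, mul_one, one_mul]
  rw [hpq]
  exact mul_mem hp hq

private lemma gen1 : Subgroup.closure ({X1, Y1} : Set PP) = ⊤ := by
  have hx : X1 ∈ Subgroup.closure ({X1, Y1} : Set PP) :=
    Subgroup.subset_closure (Set.mem_insert _ _)
  have hy : Y1 ∈ Subgroup.closure ({X1, Y1} : Set PP) :=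
    Subgroup.subset_closure (Set.mem_insert_of_mem _ rfl)
  refine gen_aux X1 Y1 ?_ ?_ ?_ ?_
  · rw [show (((finRotate 5 : Perm (Fin 5)), (1 : Perm (Fin 3))) : PP) = Y1 * Y1 * X1 * X1 * Y1⁻¹ * Y1⁻¹ from by decide]
    exact (mul_mem (mul_mem (mul_mem (mul_mem (mul_mem hy hy) hx) hx) (inv_mem hy)) (inv_mem hy))
  · rw [show (((Equiv.swap 0 (finRotate 5 0) : Perm (Fin 5)), (1 : Perm (Fin 3))) : PP) = X1 * X1 * X1 * Y1⁻¹ * Y1⁻¹ * X1 * Y1 from by decide]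
    exact (mul_mem (mul_mem (mul_mem (mul_mem (mul_mem (mul_mem hx hx) hx) (inv_mem hy)) (inv_mem hy)) hx) hy)
  · rw [show (((1 : Perm (Fin 5)), (finRotate 3 : Perm (Fin 3))) : PP) = Y1 * Y1 * Y1 * Y1 from by decide]
    exact (mul_mem (mul_mem (mul_mem hy hy) hy) hy)
  · rw [show (((1 : Perm (Fin 5)), (Equiv.swap 0 (finRotate 3 0) : Perm (Fin 3))) : PP) = X1 * X1 * Y1 * X1⁻¹ * X1⁻¹ * Y1 * X1 from by decide]
    exact (mul_mem (mul_mem (mul_mem (mul_mem (mul_mem (mul_mem hx hx) hy) (inv_mem hx)) (inv_mem hx)) hy) hx)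

private lemma gen2 : Subgroup.closure ({X2, Y2} : Set PP) = ⊤ := by
  have hx : X2 ∈ Subgroup.closure ({X2, Y2} : Set PP) :=
    Subgroup.subset_closure (Set.mem_insert _ _)
  have hy : Y2 ∈ Subgroup.closure ({X2, Y2} : Set PP) :=
    Subgroup.subset_closure (Set.mem_insert_of_mem _ rfl)
  refine gen_aux X2 Y2 ?_ ?_ ?_ ?_
  · rw [show (((finRotate 5 : Perm (Fin 5)), (1 : Perm (Fin 3))) : PP) = Y2 * X2 * Y2 * Y2 * X2 * Y2 from by decide]
    exact (mul_mem (mul_mem (mul_mem (mul_mem (mul_mem hy hx) hy) hy) hx) hy)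
  · rw [show (((Equiv.swap 0 (finRotate 5 0) : Perm (Fin 5)), (1 : Perm (Fin 3))) : PP) = X2 * Y2 * Y2 * X2 * Y2 * X2 * Y2⁻¹ * X2 * Y2 * Y2 * Y2 from by decide]
    exact (mul_mem (mul_mem (mul_mem (mul_mem (mul_mem (mul_mem (mul_mem (mul_mem (mul_mem (mul_mem hx hy) hy) hx) hy) hx) (inv_mem hy)) hx) hy) hy) hy)
  · rw [show (((1 : Perm (Fin 5)), (finRotate 3 : Perm (Fin 3))) : PP) = X2 * Y2 * Y2 * Y2 * X2 * Y2 * X2 * Y2 * Y2 * Y2 * X2 * Y2 from by decide]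
    exact (mul_mem (mul_mem (mul_mem (mul_mem (mul_mem (mul_mem (mul_mem (mul_mem (mul_mem (mul_mem (mul_mem hx hy) hy) hy) hx) hy) hx) hy) hy) hy) hx) hy)
  · rw [show (((1 : Perm (Fin 5)), (Equiv.swap 0 (finRotate 3 0) : Perm (Fin 3))) : PP) = X2 * Y2 * X2 * Y2⁻¹ * X2 * Y2 * Y2 * X2 * Y2⁻¹ * X2 * Y2 from by decide]
    exact (mul_mem (mul_mem (mul_mem (mul_mem (mul_mem (mul_mem (mul_mem (mul_mem (mul_mem (mul_mem hx hy) hx) (inv_mem hy)) hx) hy) hy) hx) (inv_mem hy)) hx) hy)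

/- ====== the Beauville structure ====== -/

private lemma reality :
    G1 * (MulEquiv.refl PP) X1 * G1⁻¹ = X1⁻¹ ∧ G1 * (MulEquiv.refl PP) Y1 * G1⁻¹ = Y1⁻¹ ∧
    G2 * (MulEquiv.refl PP) X2 * G2⁻¹ = X2⁻¹ ∧ G2 * (MulEquiv.refl PP) Y2 * G2⁻¹ = Y2⁻¹ := by
  refine ⟨?_, ?_, ?_, ?_⟩ <;> · show _ * _ * _ = _ ; decide

private lemma concreteSRB : IsStronglyRealBeauvilleGroup PP :=
  ⟨X1, Y1, X2, Y2, ⟨gen1, gen2, inter12⟩,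
    MulEquiv.refl PP, G1, G2, reality.1, reality.2.1, reality.2.2.1, reality.2.2.2⟩

end Stmt16P

namespace Stmt16T

private lemma sigma_image {G H : Type*} [Group G] [Group H] (e : G ≃* H) (g h : G) :
    beauvilleSigma (e g) (e h) = e '' beauvilleSigma g h := by
  ext w
  constructor
  · rintro ⟨i, k, hw | hw | hw⟩
    · refine ⟨(e.symm k)⁻¹ * g ^ i * e.symm k, ⟨i, e.symm k, Or.inl rfl⟩, ?_⟩
      simp [hw, map_zpow]
    · refine ⟨(e.symm k)⁻¹ * h ^ i * e.symm k, ⟨i, e.symm k, Or.inr (Or.inl rfl)⟩, ?_⟩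
      simp [hw, map_zpow]
    · refine ⟨(e.symm k)⁻¹ * (g * h) ^ i * e.symm k, ⟨i, e.symm k, Or.inr (Or.inr rfl)⟩, ?_⟩
      simp [hw, map_zpow]
  · rintro ⟨v, ⟨i, k, hv | hv | hv⟩, rfl⟩
    · exact ⟨i, e k, Or.inl (by simp [hv, map_zpow])⟩
    · exact ⟨i, e k, Or.inr (Or.inl (by simp [hv, map_zpow]))⟩
    · exact ⟨i, e k, Or.inr (Or.inr (by simp [hv, map_zpow]))⟩

private lemma closure_pair_image {G H : Type*} [Group G] [Group H] (e : G ≃* H) {x y : G}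
    (h : Subgroup.closure ({x, y} : Set G) = ⊤) :
    Subgroup.closure ({e x, e y} : Set H) = ⊤ := by
  have h2 := MonoidHom.map_closure e.toMonoidHom ({x, y} : Set G)
  rw [h, Subgroup.map_top_of_surjective _ e.surjective, Set.image_insert_eq,
    Set.image_singleton] at h2
  simp only [MulEquiv.coe_toMonoidHom] at h2
  exact h2.symm

lemma transfer {G H : Type*} [Group G] [Group H] (e : G ≃* H)
    (hG : IsStronglyRealBeauvilleGroup G) : IsStronglyRealBeauvilleGroup H := by
  obtain ⟨x1, y1, x2, y2, ⟨hc1, hc2, hint⟩, φ, g1, g2, h1, h2, h3, h4⟩ := hG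
  refine ⟨e x1, e y1, e x2, e y2, ⟨closure_pair_image e hc1, closure_pair_image e hc2, ?_⟩,
    (e.symm.trans φ).trans e, e g1, e g2, ?_, ?_, ?_, ?_⟩
  · rw [sigma_image, sigma_image, ← Set.image_inter e.injective, hint, Set.image_singleton,
      map_one]
  · rw [MulEquiv.trans_apply, MulEquiv.trans_apply, MulEquiv.symm_apply_apply,
      ← map_inv, ← map_inv, ← map_mul, ← map_mul, h1]
  · rw [MulEquiv.trans_apply, MulEquiv.trans_apply, MulEquiv.symm_apply_apply,
      ← map_inv, ← map_inv, ← map_mul, ← map_mul, h2]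
  · rw [MulEquiv.trans_apply, MulEquiv.trans_apply, MulEquiv.symm_apply_apply,
      ← map_inv, ← map_inv, ← map_mul, ← map_mul, h3]
  · rw [MulEquiv.trans_apply, MulEquiv.trans_apply, MulEquiv.symm_apply_apply,
      ← map_inv, ← map_inv, ← map_mul, ← map_mul, h4]

end Stmt16T

/-- The direct product `W(A₄) × W(I₂(3))` (isomorphic to `Sym(5) × Sym(3)`) is a strongly
real Beauville group. (Note `CoxeterMatrix.I₂ₘ 1` is the Coxeter matrix of type `I₂(3)`.) -/
theorem stmt_16 :
    IsStronglyRealBeauvilleGroup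
      ((CoxeterMatrix.A 4).Group × (CoxeterMatrix.I 1).Group) := by
  exact Stmt16T.transfer ((MulEquiv.prodCongr Stmt16C.e5 Stmt16C.e3).symm) Stmt16P.concreteSRB
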